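/- Let M ⊆ K[x_1,…,x_n] be a monomial ideal with minimal monomial generating set G(M)={x^{a_1},…,x^{a_m}}, and assume |supp(x^{a_j})| = 2 for each j = 1,…,m. Fix an index i, and suppose there exist a variable x_l ∈ supp(x^{a_i}) and an index j ≠ i such that x_l ∈ supp(x^{a_i}) ∩ supp(x^{a_j}) and x_l ∉ supp(x^{a_k}) for all k ≠ i,j. Let f_m, f_n ∈ I_M be primitive binomials with f_m^+ ∣ f_n^+. If e_i ∈ supp(f_m^−), then e_i ∈ supp(f_n^−) and the exponent of e_i in f_m^− is less than or equal to the exponent of e_i in f_n^−. -/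

import Mathlib

open MvPolynomial

/-- The nonnegative part of an integer vector. -/
def vplus {m : ℕ} (b : Fin m → ℤ) : Fin m → ℕ := fun i => (b i).toNat

/-- The nonpositive part of an integer vector. -/
def vminus {m : ℕ} (b : Fin m → ℤ) : Fin m → ℕ := fun i => (-(b i)).toNat

/-- The binomial `e^u - e^v`. -/
noncomputable def binomF (K : Type*) [CommRing K] {m : ℕ} (u v : Fin m → ℕ) :
    MvPolynomial (Fin m) K :=
  MvPolynomial.monomial (Finsupp.equivFunOnFinite.symm u) 1 -
    MvPolynomial.monomial (Finsupp.equivFunOnFinite.symm v) 1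

/-- The binomial `f_b = e^{b₊} - e^{b₋}` attached to an integer vector `b`. -/
noncomputable def fvec (K : Type*) [CommRing K] {m : ℕ} (b : Fin m → ℤ) :
    MvPolynomial (Fin m) K :=
  binomF K (vplus b) (vminus b)

/-- The binomial `e^u - e^v ∈ I` is primitive if there is no other nonzero binomial
`e^{u'} - e^{v'} ∈ I` with `e^{u'} ∣ e^u` and `e^{v'} ∣ e^v`. -/
def IsPrimitiveF (K : Type*) [CommRing K] {m : ℕ}
    (I : Ideal (MvPolynomial (Fin m) K)) (u v : Fin m → ℕ) : Prop :=
  u ≠ v ∧ binomF K u v ∈ I ∧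
    ∀ u' v' : Fin m → ℕ, u' ≠ v' → binomF K u' v' ∈ I →
      u' ≤ u → v' ≤ v → u' = u ∧ v' = v

/-- The Graver basis of `I`: the set of all primitive binomials of `I`. -/
noncomputable def graverF (K : Type*) [CommRing K] {m : ℕ}
    (I : Ideal (MvPolynomial (Fin m) K)) : Set (MvPolynomial (Fin m) K) :=
  {f | ∃ u v : Fin m → ℕ, IsPrimitiveF K I u v ∧ f = binomF K u v}

/-- `G` is a minimal generating set of the ideal `I`. -/
def IsMinimalGenSet {R : Type*} [CommRing R] (G : Set R) (I : Ideal R) : Prop :=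
  Ideal.span G = I ∧ ∀ g ∈ G, Ideal.span (G \ {g}) ≠ I

/-- A toric ideal is strongly robust if its Graver basis is a minimal generating set. -/
def StronglyRobustF (K : Type*) [CommRing K] {m : ℕ}
    (I : Ideal (MvPolynomial (Fin m) K)) : Prop :=
  IsMinimalGenSet (graverF K I) I

/-- The map `φ : K[e_1,…,e_m] → K[x_1,…,x_n]`, `e_i ↦ x^{a_i}`, attached to a family of
monomials `x^{a_1},…,x^{a_m}` (the generators of a monomial ideal `M`). -/
noncomputable def phiM (K : Type*) [CommSemiring K] {n m : ℕ} (a : Fin m → (Fin n →₀ ℕ)) :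
    MvPolynomial (Fin m) K →ₐ[K] MvPolynomial (Fin n) K :=
  MvPolynomial.aeval fun i => MvPolynomial.monomial (a i) 1

/-- The toric ideal `I_M` of the monomial ideal `M` generated by `x^{a_1},…,x^{a_m}`:
the kernel of `φ`. -/
noncomputable def toricIdealM (K : Type*) [CommRing K] {n m : ℕ}
    (a : Fin m → (Fin n →₀ ℕ)) : Ideal (MvPolynomial (Fin m) K) :=
  RingHom.ker (phiM K a).toRingHom

lemma phi_mono (K : Type*) [CommSemiring K] {n m : ℕ} (a : Fin m → (Fin n →₀ ℕ))
    (u : Fin m → ℕ) :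
    phiM K a (monomial (Finsupp.equivFunOnFinite.symm u) 1)
      = monomial (∑ k, u k • a k) 1 := by
  rw [phiM, aeval_monomial, map_one, one_mul,
    Finsupp.prod_fintype _ _ (fun k => pow_zero _), monomial_sum_one]
  simp [monomial_pow]

lemma balance (K : Type*) [Field K] {n m : ℕ} (a : Fin m → (Fin n →₀ ℕ))
    (u v : Fin m → ℕ) (h : binomF K u v ∈ toricIdealM K a) (l : Fin n) :
    ∑ k, u k * a k l = ∑ k, v k * a k l := by
  rw [toricIdealM, RingHom.mem_ker] at h
  have h' : phiM K a (binomF K u v) = 0 := h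
  rw [binomF, map_sub, phi_mono, phi_mono, sub_eq_zero] at h'
  have hexp : (∑ k, u k • a k) = ∑ k, v k • a k := by
    by_contra hne
    have := (monomial_eq_monomial_iff _ _ (1:K) (1:K)).mp h'
    rcases this with ⟨he, _⟩ | ⟨h1, _⟩
    · exact hne he
    · exact one_ne_zero h1
  have := congrArg (fun f : Fin n →₀ ℕ => f l) hexp
  simpa [Finsupp.finset_sum_apply, Finsupp.smul_apply] using this

/-- Let `M` be a monomial ideal with minimal monomial generating set
`{x^{a_1},…,x^{a_m}}`, each generator having support of cardinality `2`. Fix `i` and suppose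
there are a variable `x_l ∈ supp(x^{a_i})` and an index `j ≠ i` with
`x_l ∈ supp(x^{a_i}) ∩ supp(x^{a_j})` and `x_l ∉ supp(x^{a_k})` for all `k ≠ i, j`.
If `f_bm, f_bn ∈ I_M` are primitive binomials with `f_bm⁺ ∣ f_bn⁺` and
`e_i ∈ supp(f_bm⁻)`, then `e_i ∈ supp(f_bn⁻)` and the exponent of `e_i` in `f_bm⁻` is at
most the exponent of `e_i` in `f_bn⁻`. -/
theorem primitive_divides_neg_part
    {n m : ℕ} (K : Type*) [Field K] (a : Fin m → (Fin n →₀ ℕ))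
    (hmin : ∀ i j : Fin m, i ≠ j → ¬ a i ≤ a j)
    (hsupp2 : ∀ j : Fin m, (a j).support.card = 2)
    (i : Fin m)
    (hl : ∃ (l : Fin n) (j : Fin m), j ≠ i ∧ l ∈ (a i).support ∧ l ∈ (a j).support ∧
      ∀ k : Fin m, k ≠ i → k ≠ j → l ∉ (a k).support)
    (bm bn : Fin m → ℤ)
    (hbm : IsPrimitiveF K (toricIdealM K a) (vplus bm) (vminus bm))
    (hbn : IsPrimitiveF K (toricIdealM K a) (vplus bn) (vminus bn))
    (hdiv : vplus bm ≤ vplus bn)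
    (hi : bm i < 0) :
    bn i < 0 ∧ vminus bm i ≤ vminus bn i := by
  obtain ⟨l, j, hji, hli, hlj, hlk⟩ := hl
  have hail : 0 < a i l := Nat.pos_of_ne_zero (Finsupp.mem_support_iff.mp hli)
  have hajl : 0 < a j l := Nat.pos_of_ne_zero (Finsupp.mem_support_iff.mp hlj)
  -- balance at l, reduced to two indices
  have key : ∀ b : Fin m → ℤ, binomF K (vplus b) (vminus b) ∈ toricIdealM K a →
      (b i) * (a i l : ℤ) + (b j) * (a j l : ℤ) = 0 := by
    intro b hb
    have hbal := balance K a (vplus b) (vminus b) hb l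
    have hz : ∀ k : Fin m, k ≠ i → k ≠ j → (a k l : ℕ) = 0 := fun k h1 h2 =>
      Finsupp.notMem_support_iff.mp (hlk k h1 h2)
    -- convert to ℤ sum
    have hbal' : ∑ k, (b k) * (a k l : ℤ) = 0 := by
      have h1 : (∑ k, vplus b k * a k l : ℕ) = (∑ k, vminus b k * a k l : ℕ) := hbal
      have := congrArg (fun x : ℕ => (x : ℤ)) h1
      push_cast at this
      have heq : ∀ k : Fin m, ((vplus b k : ℤ) - (vminus b k : ℤ)) = b k := by
        intro k
        simp only [vplus, vminus]
        omega
      calc ∑ k, (b k) * (a k l : ℤ)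
            = ∑ k, ((vplus b k : ℤ) - (vminus b k : ℤ)) * (a k l : ℤ) := by
              refine Finset.sum_congr rfl fun k _ => by rw [heq]
        _ = ∑ k, (vplus b k : ℤ) * (a k l) - ∑ k, (vminus b k : ℤ) * (a k l) := by
              rw [← Finset.sum_sub_distrib]
              exact Finset.sum_congr rfl fun k _ => sub_mul _ _ _
        _ = 0 := by rw [this]; ring
    rw [← hbal']
    rw [Finset.sum_eq_add_of_mem i j (Finset.mem_univ _) (Finset.mem_univ _)
      (fun h => absurd h.symm hji) ?_]
    intro k _ hk
    have := hz k hk.1 hk.2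
    simp [this]
  have keym := key bm hbm.2.1
  have keyn := key bn hbn.2.1
  -- from keym and bm i < 0 : bm j > 0 and bm j * a j l = (-bm i) * a i l
  have hbmj : 0 < bm j := by
    by_contra h
    push_neg at h
    nlinarith [hi, hail, hajl, keym]
  have hdivj := hdiv j
  have hbnj : 0 < bn j := by
    have : (0:ℤ) < (vplus bm j : ℤ) := by
      simp [vplus]; omega
    have h2 : vplus bm j ≤ vplus bn j := hdivj
    simp [vplus] at this h2 ⊢
    omega
  have hbni : bn i < 0 := by
    nlinarith [keyn, hbnj, hail, hajl]
  refine ⟨hbni, ?_⟩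
  -- (-bm i) * a i l = bm j * a j l ≤ bn j * a j l = (-bn i) * a i l
  have hmj_le : bm j ≤ bn j := by
    have h2 : vplus bm j ≤ vplus bn j := hdivj
    simp [vplus] at h2
    omega
  have : (-bm i) * (a i l : ℤ) ≤ (-bn i) * (a i l : ℤ) := by
    nlinarith [keym, keyn, hmj_le, hajl]
  have hle : -bm i ≤ -bn i := by
    have hc : (0:ℤ) < (a i l : ℤ) := by exact_mod_cast hail
    nlinarith [this, hc]
  simp [vminus]
  omega
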